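/- Let Δ' ⊂ ℝ^{n+1} be the bundle polytope over the 1-simplex determined by (H, κ_{N+1}, κ_{N+2}) with fiber a smooth polytope Δ = Δ(κ) ⊂ ℝⁿ, suppose Δ' is combinatorially a product, and suppose H ≠ 0. Call an edge of Δ' vertical if it is parallel to e_{n+1}, and assume the genericity condition: every edge of Δ' whose affine length equals the affine length of some vertical edge is itself vertical. Then Δ' has two vertices v₁, v₂ that are not equivalent: no integral affine transformation φ of ℝ^{n+1} satisfies φ(Δ') = Δ' and φ(v₁) = v₂. -/

import Mathlib

open MeasureTheory Finset
open scoped Pointwise Classical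

noncomputable section

namespace ToricStmt

/-- Euclidean `n`-space. -/
abbrev E (n : ℕ) : Type := EuclideanSpace ℝ (Fin n)

/-- The real vector associated to an integer vector. -/
def iv {n : ℕ} (g : Fin n → ℤ) : E n := WithLp.toLp 2 (fun t => (g t : ℝ))

/-- The standard pairing/dot product. -/
def dot {n : ℕ} (u v : E n) : ℝ := ∑ i, u i * v i

/-- An integer vector is primitive if the gcd of its coordinates is `1`. -/
def IsPrimitive {n : ℕ} (g : Fin n → ℤ) : Prop := Finset.univ.gcd g = 1

/-- The polytope `Δ(κ) = {x : ⟨η i, x⟩ ≤ κ i for all i}`. -/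
def Delta {n N : ℕ} (η : Fin N → Fin n → ℤ) (κ : Fin N → ℝ) : Set (E n) :=
  {x | ∀ i, dot (iv (η i)) x ≤ κ i}

/-- The face `F_I(κ)` of `Δ(κ)`. -/
def Face {n N : ℕ} (η : Fin N → Fin n → ℤ) (κ : Fin N → ℝ) (I : Finset (Fin N)) :
    Set (E n) :=
  {x | x ∈ Delta η κ ∧ ∀ i ∈ I, dot (iv (η i)) x = κ i}

/-- A vertex of `Δ(κ)` is a point which is a face. -/
def IsVertex {n N : ℕ} (η : Fin N → Fin n → ℤ) (κ : Fin N → ℝ) (x : E n) : Prop :=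
  ∃ I : Finset (Fin N), Face η κ I = {x}

/-- The dimension of (the affine hull of) a subset of `E n`. -/
def faceDim {n : ℕ} (F : Set (E n)) : ℕ := Module.finrank ℝ (vectorSpan ℝ F)

/-- The set of constraints active at `x`. -/
def activeIdx {n N : ℕ} (η : Fin N → Fin n → ℤ) (κ : Fin N → ℝ) (x : E n) :
    Finset (Fin N) :=
  Finset.univ.filter fun i => dot (iv (η i)) x = κ i

/-- `Δ(κ)` is a smooth polytope: compact with nonempty interior, all facets of
dimension `n - 1`, and at each vertex exactly `n` facets meet, whose conormals form a
`ℤ`-basis of `ℤⁿ`. -/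
def IsSmoothPolytope {n N : ℕ} (η : Fin N → Fin n → ℤ) (κ : Fin N → ℝ) : Prop :=
  IsCompact (Delta η κ) ∧ (interior (Delta η κ)).Nonempty ∧
  (∀ i, faceDim (Face η κ {i}) = n - 1) ∧
  ∀ x, IsVertex η κ x →
    (activeIdx η κ x).card = n ∧
    Submodule.span ℤ (↑((activeIdx η κ x).image η) : Set (Fin n → ℤ)) = ⊤

/-- A chamber neighbourhood of `κ`: an open connected set of support constants containing
`κ` on which the polytope stays smooth with the same combinatorics. -/
def IsChamberNbhd {n N : ℕ} (η : Fin N → Fin n → ℤ) (κ : Fin N → ℝ)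
    (U : Set (Fin N → ℝ)) : Prop :=
  IsOpen U ∧ IsConnected U ∧ κ ∈ U ∧
  ∀ κ' ∈ U, IsSmoothPolytope η κ' ∧
    ∀ I : Finset (Fin N), ((Face η κ' I).Nonempty ↔ (Face η κ I).Nonempty)

/-- The barycenter of `Δ(κ)` with respect to Lebesgue measure. -/
def bary {n N : ℕ} (η : Fin N → Fin n → ℤ) (κ : Fin N → ℝ) : E n :=
  (volume (Delta η κ)).toReal⁻¹ • ∫ x in Delta η κ, x

/-- `H` is mass linear on `U` with coefficients `γ`. -/
def MassLinearOn {n N : ℕ} (η : Fin N → Fin n → ℤ) (H : E n)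
    (U : Set (Fin N → ℝ)) (γ : Fin N → ℝ) : Prop :=
  ∀ κ' ∈ U, dot H (bary η κ') = ∑ i, γ i * κ' i

/-- `v` and `w` are the two endpoints of an edge (a one-dimensional face) of `Δ(κ)`. -/
def IsEdgeBetween {n N : ℕ} (η : Fin N → Fin n → ℤ) (κ : Fin N → ℝ)
    (v w : E n) : Prop :=
  v ≠ w ∧ IsVertex η κ v ∧ IsVertex η κ w ∧
  ∃ I : Finset (Fin N), Face η κ I = segment ℝ v w

/-- Conormals of the bundle polytope over the `1`-simplex determined by `H`:
the prolonged fiber conormals `(η i, 0)`, then `(0, -1)`, then `(H, 1)`. -/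
def bunEta1 {n N : ℕ} (η : Fin N → Fin n → ℤ) (H : Fin n → ℤ) :
    Fin (N + 2) → Fin (n + 1) → ℤ := fun j t =>
  if hj : (j : ℕ) < N then (if ht : (t : ℕ) < n then η ⟨j, hj⟩ ⟨t, ht⟩ else 0)
  else if (j : ℕ) = N then (if (t : ℕ) = n then -1 else 0)
  else (if ht : (t : ℕ) < n then H ⟨t, ht⟩ else 1)

/-- Support constants of the bundle polytope over the `1`-simplex. -/
def bunKappa1 {N : ℕ} (κ : Fin N → ℝ) (κ1 κ2 : ℝ) : Fin (N + 2) → ℝ := fun j =>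
  if hj : (j : ℕ) < N then κ ⟨j, hj⟩ else if (j : ℕ) = N then κ1 else κ2

/-- The index of the bottom facet `F'_{N+1}`. -/
def idxB {N : ℕ} : Fin (N + 2) := ⟨N, by omega⟩

/-- The index of the top facet `F'_{N+2}`. -/
def idxT {N : ℕ} : Fin (N + 2) := ⟨N + 1, by omega⟩

/-- The bundle polytope over the `1`-simplex is combinatorially a product: it is a
compact smooth polytope, top and bottom facets are disjoint, and for every
`I ⊆ {1,…,N}` the faces `F'_I ∩ F'_{N+1}`, `F_I` and `F'_I ∩ F'_{N+2}` are
simultaneously nonempty or empty. -/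
def CombProd1 {n N : ℕ} (η : Fin N → Fin n → ℤ) (κ : Fin N → ℝ)
    (H : Fin n → ℤ) (κ1 κ2 : ℝ) : Prop :=
  IsSmoothPolytope (bunEta1 η H) (bunKappa1 κ κ1 κ2) ∧
  Face (bunEta1 η H) (bunKappa1 κ κ1 κ2) {idxB, idxT} = ∅ ∧
  ∀ I : Finset (Fin N),
    ((Face (bunEta1 η H) (bunKappa1 κ κ1 κ2)
        (insert idxB (I.image (Fin.castAdd 2)))).Nonempty ↔ (Face η κ I).Nonempty) ∧
    ((Face (bunEta1 η H) (bunKappa1 κ κ1 κ2)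
        (insert idxT (I.image (Fin.castAdd 2)))).Nonempty ↔ (Face η κ I).Nonempty)

/-- The affine length of the segment from `v` to `w`: the positive scalar `c` with
`w - v = c • g` for a primitive integer vector `g` (and `0` if there is none). -/
def affLen {n : ℕ} (v w : E n) : ℝ :=
  if h : ∃ c : ℝ, 0 < c ∧ ∃ g : Fin n → ℤ, IsPrimitive g ∧ w - v = c • iv g
  then h.choose else 0

/-- The last standard basis vector `e_{n+1}` of `ℝ^{n+1}`. -/
def lastBasis (n : ℕ) : E (n + 1) := WithLp.toLp 2 (fun t => if (t : ℕ) = n then 1 else 0)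

/-- The segment from `v` to `w` is vertical, i.e. parallel to `e_{n+1}`. -/
def VerticalSeg {n : ℕ} (v w : E (n + 1)) : Prop := ∃ c : ℝ, w - v = c • lastBasis n

/-- The integral affine self-map `x ↦ A x + c` of `ℝᵐ`. -/
def IntAffMap {m : ℕ} (A : Matrix (Fin m) (Fin m) ℤ) (c : E m) (x : E m) : E m :=
  WithLp.toLp 2 (fun j => (∑ t, (A j t : ℝ) * x t) + c j)

-- basic coordinate lemmas
@[simp] lemma smul_coord {n : ℕ} (a : ℝ) (v : E n) (j : Fin n) : (a • v) j = a * v j := rfl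
@[simp] lemma add_coord {n : ℕ} (v w : E n) (j : Fin n) : (v + w) j = v j + w j := rfl
@[simp] lemma sub_coord {n : ℕ} (v w : E n) (j : Fin n) : (v - w) j = v j - w j := rfl

lemma dot_add {n : ℕ} (u x y : E n) : dot u (x + y) = dot u x + dot u y := by
  simp [dot, mul_add, Finset.sum_add_distrib]
lemma dot_sub {n : ℕ} (u x y : E n) : dot u (x - y) = dot u x - dot u y := by
  simp [dot, mul_sub, Finset.sum_sub_distrib]
lemma dot_smul {n : ℕ} (u : E n) (a : ℝ) (x : E n) : dot u (a • x) = a * dot u x := by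
  simp [dot, Finset.mul_sum, mul_comm, mul_assoc, mul_left_comm]
lemma dot_comb {n : ℕ} (u : E n) (a b : ℝ) (x y : E n) :
    dot u (a • x + b • y) = a * dot u x + b * dot u y := by
  rw [dot_add, dot_smul, dot_smul]

lemma dot_continuous {n : ℕ} (u : E n) : Continuous (fun x : E n => dot u x) := by
  unfold dot
  exact continuous_finset_sum _ fun i _ =>
    (continuous_const.mul (EuclideanSpace.proj i : E n →L[ℝ] ℝ).continuous)

def MyExtr {m : ℕ} (s : Set (E m)) (x : E m) : Prop :=
  x ∈ s ∧ ∀ y ∈ s, ∀ z ∈ s, ∀ a b : ℝ, 0 < a → 0 < b → a + b = 1 →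
    x = a • y + b • z → y = x

-- L1: pushing away from y stays in Delta
lemma push_lemma {m M : ℕ} (η : Fin M → Fin m → ℤ) (κ : Fin M → ℝ) (x y : E m)
    (hx : x ∈ Delta η κ) (_hy : y ∈ Delta η κ)
    (hact : ∀ i, dot (iv (η i)) x = κ i → dot (iv (η i)) y = κ i) :
    ∃ ε : ℝ, 0 < ε ∧ x + ε • (x - y) ∈ Delta η κ := by
  classical
  set U : Set (E m) := ⋂ i : Fin M, {w | dot (iv (η i)) x ≠ κ i → dot (iv (η i)) w < κ i}
    with hU
  have hUopen : IsOpen U := by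
    apply isOpen_iInter_of_finite
    intro i
    by_cases h : dot (iv (η i)) x = κ i
    · have : {w : E m | dot (iv (η i)) x ≠ κ i → dot (iv (η i)) w < κ i} = Set.univ := by
        ext w; simp [h]
      rw [this]; exact isOpen_univ
    · have : {w : E m | dot (iv (η i)) x ≠ κ i → dot (iv (η i)) w < κ i}
          = {w | dot (iv (η i)) w < κ i} := by
        ext w; simp [h]
      rw [this]
      exact isOpen_lt (dot_continuous _) continuous_const
  have hxU : x ∈ U := by
    simp only [hU, Set.mem_iInter, Set.mem_setOf_eq]
    intro i hne
    exact lt_of_le_of_ne (hx i) hne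
  have hcont : Continuous (fun ε : ℝ => x + ε • (x - y)) := by
    exact continuous_const.add (continuous_id.smul continuous_const)
  have h0 : (fun ε : ℝ => x + ε • (x - y)) 0 = x := by simp
  have hnb : (fun ε : ℝ => x + ε • (x - y)) ⁻¹' U ∈ nhds (0 : ℝ) := by
    apply hcont.continuousAt.preimage_mem_nhds
    have : x + (0:ℝ) • (x - y) = x := by simp
    rw [this]; exact hUopen.mem_nhds hxU
  obtain ⟨δ, hδ, hball⟩ := Metric.mem_nhds_iff.1 hnb
  refine ⟨δ/2, by positivity, ?_⟩
  have hmem : x + (δ/2) • (x - y) ∈ U := by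
    apply hball
    have : dist (δ/2) (0:ℝ) < δ := by
      rw [Real.dist_eq, sub_zero, abs_of_pos (by positivity : (0:ℝ) < δ/2)]; linarith
    exact this
  intro i
  by_cases h : dot (iv (η i)) x = κ i
  · have hy' := hact i h
    rw [dot_add, dot_smul, dot_sub, h, hy']
    simp
  · have := (Set.mem_iInter.1 hmem i) h
    exact le_of_lt this

-- vertex ↔ extreme
lemma extr_of_face_singleton {m M : ℕ} (η : Fin M → Fin m → ℤ) (κ : Fin M → ℝ)
    (I : Finset (Fin M)) (x : E m) (hF : Face η κ I = {x}) :
    MyExtr (Delta η κ) x := by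
  have hxF : x ∈ Face η κ I := by rw [hF]; rfl
  refine ⟨hxF.1, ?_⟩
  intro y hy z hz a b ha hb hab hxyz
  have hyF : y ∈ Face η κ I := by
    refine ⟨hy, fun i hi => ?_⟩
    have hxi := hxF.2 i hi
    have h1 : dot (iv (η i)) x = a * dot (iv (η i)) y + b * dot (iv (η i)) z := by
      rw [hxyz, dot_comb]
    have hyi := hy i; have hzi := hz i
    by_contra hne
    have hylt : dot (iv (η i)) y < κ i := lt_of_le_of_ne hyi hne
    have : dot (iv (η i)) x < κ i := by
      calc dot (iv (η i)) x = a * dot (iv (η i)) y + b * dot (iv (η i)) z := h1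
        _ < a * κ i + b * κ i := by
            apply add_lt_add_of_lt_of_le
            · exact mul_lt_mul_of_pos_left hylt ha
            · exact mul_le_mul_of_nonneg_left hzi hb.le
        _ = κ i := by rw [← add_mul, hab, one_mul]
    exact absurd hxi (ne_of_lt this)
  rw [hF] at hyF; exact hyF

lemma face_active_of_extr {m M : ℕ} (η : Fin M → Fin m → ℤ) (κ : Fin M → ℝ)
    (x : E m) (hx : MyExtr (Delta η κ) x) :
    Face η κ (activeIdx η κ x) = {x} := by
  obtain ⟨hxD, hext⟩ := hx
  apply Set.eq_singleton_iff_unique_mem.2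
  constructor
  · exact ⟨hxD, fun i hi => (Finset.mem_filter.1 hi).2⟩
  · intro y hy
    have hact : ∀ i, dot (iv (η i)) x = κ i → dot (iv (η i)) y = κ i := by
      intro i h
      exact hy.2 i (Finset.mem_filter.2 ⟨Finset.mem_univ _, h⟩)
    obtain ⟨ε, hε, hz⟩ := push_lemma η κ x y hxD hy.1 hact
    -- x = (ε/(1+ε)) y + (1/(1+ε)) z  where z = x + ε(x-y)
    set z := x + ε • (x - y) with hzdef
    have h1ε : (0:ℝ) < 1 + ε := by linarith
    have hcomb : x = (ε/(1+ε)) • y + (1/(1+ε)) • z := by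
      rw [hzdef]
      ext j
      simp only [smul_coord, add_coord, sub_coord]
      field_simp
      ring
    have := hext y hy.1 z hz (ε/(1+ε)) (1/(1+ε)) (by positivity) (by positivity)
      (by field_simp; ring) hcomb
    exact this


-- existence of an extreme maximizer of a linear functional
lemma exists_extr_max {m M : ℕ} (η : Fin M → Fin m → ℤ) (κ : Fin M → ℝ)
    (hcomp : IsCompact (Delta η κ)) (hne : (Delta η κ).Nonempty) (u : E m) :
    ∃ p, MyExtr (Delta η κ) p ∧ ∀ x ∈ Delta η κ, dot u x ≤ dot u p := by
  obtain ⟨x₀, hx₀, hmax⟩ := hcomp.exists_isMaxOn hne (dot_continuous u).continuousOn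
  set S : Set (E m) := Delta η κ ∩ {x | dot u x = dot u x₀} with hS
  have hScomp : IsCompact S :=
    hcomp.inter_right (isClosed_eq (dot_continuous u) continuous_const)
  have hSne : S.Nonempty := ⟨x₀, hx₀, rfl⟩
  have hnormcont : Continuous (fun x : E m => ∑ i, x i * x i) :=
    continuous_finset_sum _ fun i _ =>
      ((EuclideanSpace.proj i : E m →L[ℝ] ℝ).continuous.mul
        (EuclideanSpace.proj i : E m →L[ℝ] ℝ).continuous)
  obtain ⟨p, hpS, hpmax⟩ := hScomp.exists_isMaxOn hSne hnormcont.continuousOn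
  refine ⟨p, ⟨hpS.1, ?_⟩, fun x hx => hpS.2 ▸ hmax hx⟩
  intro y hy z hz a b ha hb hab hxyz
  -- y and z are in S
  have hduy : dot u y ≤ dot u x₀ := hmax hy
  have hduz : dot u z ≤ dot u x₀ := hmax hz
  have hp : dot u p = a * dot u y + b * dot u z := by rw [hxyz, dot_comb]
  have hpx₀ : dot u p = dot u x₀ := hpS.2
  have habx : a * dot u x₀ + b * dot u x₀ = dot u x₀ := by rw [← add_mul, hab, one_mul]
  have e1 : a * dot u y ≤ a * dot u x₀ := mul_le_mul_of_nonneg_left hduy ha.le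
  have e2 : b * dot u z ≤ b * dot u x₀ := mul_le_mul_of_nonneg_left hduz hb.le
  have ey : a * dot u y = a * dot u x₀ := by linarith
  have ez : b * dot u z = b * dot u x₀ := by linarith
  have hyS : dot u y = dot u x₀ ∧ dot u z = dot u x₀ :=
    ⟨mul_left_cancel₀ (ne_of_gt ha) ey, mul_left_cancel₀ (ne_of_gt hb) ez⟩
  have hySm : y ∈ S := ⟨hy, hyS.1⟩
  have hzSm : z ∈ S := ⟨hz, hyS.2⟩
  have hny : (∑ i, y i * y i) ≤ ∑ i, p i * p i := hpmax hySm
  have hnz : (∑ i, z i * z i) ≤ ∑ i, p i * p i := hpmax hzSm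
  -- strict convexity identity
  have hiden : (∑ i, p i * p i)
      = a * (∑ i, y i * y i) + b * (∑ i, z i * z i) - a * b * (∑ i, (y i - z i) * (y i - z i)) := by
    rw [hxyz]
    rw [Finset.mul_sum, Finset.mul_sum, Finset.mul_sum, ← Finset.sum_add_distrib,
      ← Finset.sum_sub_distrib]
    apply Finset.sum_congr rfl
    intro i _
    simp only [smul_coord, add_coord, sub_coord]
    have hb' : b = 1 - a := by linarith
    rw [hb']; ring
  have habP : a * (∑ i, p i * p i) + b * (∑ i, p i * p i) = (∑ i, p i * p i) := by
    rw [← add_mul, hab, one_mul]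
  have f1 : a * (∑ i, y i * y i) ≤ a * (∑ i, p i * p i) := mul_le_mul_of_nonneg_left hny ha.le
  have f2 : b * (∑ i, z i * z i) ≤ b * (∑ i, p i * p i) := mul_le_mul_of_nonneg_left hnz hb.le
  have habQ : a * b * (∑ i, (y i - z i) * (y i - z i)) ≤ 0 := by linarith
  have hsq : (∑ i, (y i - z i) * (y i - z i)) ≤ 0 := by
    by_contra hpos
    push_neg at hpos
    nlinarith [mul_pos ha hb]
  have hyz : y = z := by
    ext i
    have hterm : ∀ j ∈ Finset.univ, (0:ℝ) ≤ (y j - z j) * (y j - z j) :=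
      fun j _ => mul_self_nonneg _
    have := (Finset.sum_eq_zero_iff_of_nonneg hterm).1
      (le_antisymm hsq (Finset.sum_nonneg hterm)) i (Finset.mem_univ i)
    have := mul_self_eq_zero.1 this
    linarith
  rw [hyz] at hxyz
  have : p = z := by
    rw [hxyz]; ext i; simp only [smul_coord, add_coord]; rw [← add_mul, hab, one_mul]
  rw [hyz, this]

-- gcd lemmas
lemma gcd_int_nonneg {m : ℕ} (g : Fin m → ℤ) : 0 ≤ Finset.univ.gcd g := by
  have := Finset.normalize_gcd (s := (Finset.univ : Finset (Fin m))) (f := g)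
  rw [← this, ← Int.abs_eq_normalize]
  exact abs_nonneg _

lemma prim_exists_ne {m : ℕ} (g : Fin m → ℤ) (h : IsPrimitive g) : ∃ j, g j ≠ 0 := by
  by_contra hall
  push_neg at hall
  have : Finset.univ.gcd g = 0 := Finset.gcd_eq_zero_iff.2 fun i _ => hall i
  rw [IsPrimitive] at h; omega

lemma prim_neg {m : ℕ} (g : Fin m → ℤ) (h : IsPrimitive g) : IsPrimitive (fun t => -g t) := by
  rw [IsPrimitive] at *
  have h1 : Finset.univ.gcd (fun t => -g t) ∣ Finset.univ.gcd g := by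
    apply Finset.dvd_gcd
    intro i _
    have : Finset.univ.gcd (fun t => -g t) ∣ -g i :=
      Finset.gcd_dvd (f := fun t => -g t) (Finset.mem_univ i)
    exact (dvd_neg).1 this
  have h2 : Finset.univ.gcd g ∣ Finset.univ.gcd (fun t => -g t) := by
    apply Finset.dvd_gcd
    intro i _
    exact (dvd_neg (α := ℤ)).2 (Finset.gcd_dvd (Finset.mem_univ i))
  have := Int.dvd_antisymm (gcd_int_nonneg _) (gcd_int_nonneg g) h1 h2
  omega

-- uniqueness of the affine-length representation
lemma unique_scale {m : ℕ} (c₁ c₂ : ℝ) (g₁ g₂ : Fin m → ℤ)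
    (hc₁ : 0 < c₁) (hc₂ : 0 < c₂) (h₁ : IsPrimitive g₁) (h₂ : IsPrimitive g₂)
    (heq : c₁ • iv g₁ = c₂ • (iv g₂ : E m)) : c₁ = c₂ := by
  obtain ⟨j, hj⟩ := prim_exists_ne g₁ h₁
  have hco : ∀ t, c₁ * (g₁ t : ℝ) = c₂ * (g₂ t : ℝ) := by
    intro t
    have := congrFun (congrArg WithLp.ofLp heq) t
    simpa [iv] using this
  set q : ℤ := g₁ j with hq
  set p : ℤ := g₂ j with hp
  have hqp : c₁ * (q:ℝ) = c₂ * (p:ℝ) := hco j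
  have hpg : ∀ t, p * g₁ t = q * g₂ t := by
    intro t
    have : c₂ * ((p:ℝ) * g₁ t) = c₂ * ((q:ℝ) * g₂ t) := by
      have h1 := hco t
      calc c₂ * ((p:ℝ) * g₁ t) = (c₂ * (p:ℝ)) * g₁ t := by ring
        _ = (c₁ * (q:ℝ)) * g₁ t := by rw [← hqp]
        _ = (q:ℝ) * (c₁ * (g₁ t : ℝ)) := by ring
        _ = (q:ℝ) * (c₂ * (g₂ t : ℝ)) := by rw [h1]
        _ = c₂ * ((q:ℝ) * g₂ t) := by ring
    have := mul_left_cancel₀ (ne_of_gt hc₂) this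
    exact_mod_cast this
  have hgcd : normalize p * Finset.univ.gcd g₁ = normalize q * Finset.univ.gcd g₂ := by
    rw [← Finset.gcd_mul_left, ← Finset.gcd_mul_left]
    exact Finset.gcd_congr rfl fun t _ => hpg t
  rw [h₁, h₂, mul_one, mul_one] at hgcd
  have habs : |p| = |q| := by
    rw [Int.abs_eq_normalize, Int.abs_eq_normalize, hgcd]
  -- signs agree since c₁ q = c₂ p with c₁, c₂ > 0 and q ≠ 0
  have hpq : p = q := by
    rcases abs_eq_abs.1 habs with h | h
    · exact h
    · exfalso
      rw [h] at hqp
      push_cast at hqp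
      have hq0 : (q:ℝ) ≠ 0 := Int.cast_ne_zero.2 hj
      rcases lt_or_gt_of_ne hq0 with hlt | hgt
      · nlinarith
      · nlinarith
  rw [hpq] at hqp
  have hq0 : (q:ℝ) ≠ 0 := Int.cast_ne_zero.2 hj
  exact mul_right_cancel₀ hq0 hqp


lemma affLen_eq {m : ℕ} (v w : E m) (a : ℝ) (g : Fin m → ℤ)
    (ha : 0 < a) (hg : IsPrimitive g) (hvw : w - v = a • iv g) :
    affLen v w = a := by
  have hex : ∃ c : ℝ, 0 < c ∧ ∃ g : Fin m → ℤ, IsPrimitive g ∧ w - v = c • iv g :=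
    ⟨a, ha, g, hg, hvw⟩
  rw [affLen, dif_pos hex]
  obtain ⟨hc, g', hg', hvw'⟩ := hex.choose_spec
  have : hex.choose • iv g' = a • (iv g : E m) := by rw [← hvw', hvw]
  exact unique_scale _ _ _ _ hc ha hg' hg this

-- the integer image under an invertible matrix
def mulVecInt {m : ℕ} (A : Matrix (Fin m) (Fin m) ℤ) (g : Fin m → ℤ) : Fin m → ℤ :=
  fun j => ∑ t, A j t * g t

lemma prim_mulVec {m : ℕ} (A : Matrix (Fin m) (Fin m) ℤ) (hA : IsUnit A)
    (g : Fin m → ℤ) (hg : IsPrimitive g) : IsPrimitive (mulVecInt A g) := by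
  obtain ⟨u, hu⟩ := hA
  set B := (↑u⁻¹ : Matrix (Fin m) (Fin m) ℤ) with hB
  have hBA : B * A = 1 := by rw [hB, ← hu]; exact u.inv_mul
  have hrec : ∀ i, g i = ∑ j, B i j * mulVecInt A g j := by
    intro i
    unfold mulVecInt
    calc g i = ∑ t, (B * A) i t * g t := by
          rw [hBA]
          simp [Matrix.one_apply]
      _ = ∑ t, (∑ j, B i j * A j t) * g t := by
          apply Finset.sum_congr rfl; intro t _; rw [Matrix.mul_apply]
      _ = ∑ t, ∑ j, B i j * (A j t * g t) := by
          apply Finset.sum_congr rfl; intro t _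
          rw [Finset.sum_mul]; apply Finset.sum_congr rfl; intro j _; ring
      _ = ∑ j, ∑ t, B i j * (A j t * g t) := Finset.sum_comm
      _ = ∑ j, B i j * ∑ t, A j t * g t := by
          apply Finset.sum_congr rfl; intro j _; rw [Finset.mul_sum]
  set d := Finset.univ.gcd (mulVecInt A g) with hd
  have hdvd : ∀ i, d ∣ g i := by
    intro i
    rw [hrec i]
    apply Finset.dvd_sum
    intro j _
    exact Dvd.dvd.mul_left (Finset.gcd_dvd (Finset.mem_univ j)) _
  have hdd : d ∣ Finset.univ.gcd g := Finset.dvd_gcd fun i _ => hdvd i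
  rw [hg] at hdd
  have hnn : 0 ≤ d := gcd_int_nonneg _
  have : d = 1 := by
    rcases Int.isUnit_iff.1 (isUnit_of_dvd_one hdd) with h | h
    · exact h
    · omega
  rw [IsPrimitive, ← hd]; exact this

-- ===== IntAffMap lemmas =====
lemma intAff_coord {m : ℕ} (A : Matrix (Fin m) (Fin m) ℤ) (c : E m) (x : E m) (j : Fin m) :
    IntAffMap A c x j = (∑ t, (A j t : ℝ) * x t) + c j := rfl

lemma intAff_comb {m : ℕ} (A : Matrix (Fin m) (Fin m) ℤ) (c : E m) (a b : ℝ)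
    (hab : a + b = 1) (x y : E m) :
    IntAffMap A c (a • x + b • y) = a • IntAffMap A c x + b • IntAffMap A c y := by
  ext j
  simp only [IntAffMap, smul_coord, add_coord]
  have : ∀ t ∈ Finset.univ, ((A j t : ℝ)) * (a * x t + b * y t)
      = a * ((A j t : ℝ) * x t) + b * ((A j t : ℝ) * y t) := fun t _ => by ring
  rw [Finset.sum_congr rfl this, Finset.sum_add_distrib, ← Finset.mul_sum, ← Finset.mul_sum]
  linear_combination (c j) * hab.symm

lemma intAff_inverse {m : ℕ} (A : Matrix (Fin m) (Fin m) ℤ) (c : E m) (hA : IsUnit A) :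
    ∃ B : Matrix (Fin m) (Fin m) ℤ, ∃ c' : E m, IsUnit B ∧
      (∀ x, IntAffMap B c' (IntAffMap A c x) = x) ∧
      (∀ x, IntAffMap A c (IntAffMap B c' x) = x) := by
  obtain ⟨u, hu⟩ := hA
  set B := (↑u⁻¹ : Matrix (Fin m) (Fin m) ℤ) with hB
  have hBA : B * A = 1 := by rw [hB, ← hu]; exact u.inv_mul
  have hAB : A * B = 1 := by rw [hB, ← hu]; exact u.mul_inv
  have key : ∀ (P Q : Matrix (Fin m) (Fin m) ℤ), P * Q = 1 → ∀ (z : E m) (i : Fin m),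
      (∑ j, (P i j : ℝ) * ∑ t, (Q j t : ℝ) * z t) = z i := by
    intro P Q hPQ z i
    calc (∑ j, (P i j : ℝ) * ∑ t, (Q j t : ℝ) * z t)
        = ∑ j, ∑ t, (P i j : ℝ) * ((Q j t : ℝ) * z t) := by
          apply Finset.sum_congr rfl; intro j _; rw [Finset.mul_sum]
      _ = ∑ t, ∑ j, (P i j : ℝ) * ((Q j t : ℝ) * z t) := Finset.sum_comm
      _ = ∑ t, (((P * Q) i t : ℤ) : ℝ) * z t := by
          apply Finset.sum_congr rfl; intro t _
          rw [Matrix.mul_apply]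
          push_cast
          rw [Finset.sum_mul]
          apply Finset.sum_congr rfl; intro j _; ring
      _ = z i := by rw [hPQ]; simp [Matrix.one_apply]
  refine ⟨B, WithLp.toLp 2 (fun i => -(∑ t, (B i t : ℝ) * c t)), ⟨u⁻¹, hB.symm⟩, ?_, ?_⟩
  · intro x; ext i
    simp only [IntAffMap]
    have : (∑ t, (B i t : ℝ) * ((∑ s, (A t s : ℝ) * x s) + c t))
        = (∑ t, (B i t : ℝ) * (∑ s, (A t s : ℝ) * x s)) + ∑ t, (B i t : ℝ) * c t := by
      rw [← Finset.sum_add_distrib]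
      apply Finset.sum_congr rfl; intro t _; ring
    rw [this, key B A hBA x i]; ring
  · intro x; ext i
    simp only [IntAffMap]
    have : (∑ t, (A i t : ℝ) * ((∑ s, (B t s : ℝ) * x s) + -(∑ s, (B t s : ℝ) * c s)))
        = (∑ t, (A i t : ℝ) * (∑ s, (B t s : ℝ) * x s))
          - ∑ t, (A i t : ℝ) * (∑ s, (B t s : ℝ) * c s) := by
      rw [← Finset.sum_sub_distrib]
      apply Finset.sum_congr rfl; intro t _; ring
    rw [this, key A B hAB x i, key A B hAB c i]; ring

lemma intAff_image_segment {m : ℕ} (A : Matrix (Fin m) (Fin m) ℤ) (c : E m) (v w : E m) :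
    IntAffMap A c '' segment ℝ v w = segment ℝ (IntAffMap A c v) (IntAffMap A c w) := by
  ext z
  constructor
  · rintro ⟨x, ⟨a, b, ha, hb, hab, rfl⟩, rfl⟩
    exact ⟨a, b, ha, hb, hab, (intAff_comb A c a b hab v w).symm⟩
  · rintro ⟨a, b, ha, hb, hab, rfl⟩
    exact ⟨a • v + b • w, ⟨a, b, ha, hb, hab, rfl⟩, intAff_comb A c a b hab v w⟩

lemma intAff_sub {m : ℕ} (A : Matrix (Fin m) (Fin m) ℤ) (c : E m) (v w : E m) (j : Fin m) :
    (IntAffMap A c w - IntAffMap A c v) j = ∑ t, (A j t : ℝ) * (w - v) t := by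
  simp only [sub_coord, IntAffMap]
  have h2 : ∀ t ∈ Finset.univ, (A j t : ℝ) * (w t - v t)
      = (A j t : ℝ) * w t - (A j t : ℝ) * v t := fun t _ => by ring
  rw [Finset.sum_congr rfl h2, Finset.sum_sub_distrib]
  ring

lemma affLen_image {m : ℕ} (A : Matrix (Fin m) (Fin m) ℤ) (c : E m) (hA : IsUnit A)
    (v w : E m) (a : ℝ) (g : Fin m → ℤ) (ha : 0 < a) (hg : IsPrimitive g)
    (hvw : w - v = a • iv g) :
    affLen (IntAffMap A c v) (IntAffMap A c w) = a := by
  apply affLen_eq _ _ a (mulVecInt A g) ha (prim_mulVec A hA g hg)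
  ext j
  rw [intAff_sub]
  simp only [smul_coord, iv, mulVecInt]
  push_cast
  rw [Finset.mul_sum]
  apply Finset.sum_congr rfl
  intro t _
  have : (w - v) t = a * (g t : ℝ) := by rw [hvw]; rfl
  rw [this]; ring

lemma intAff_injective {m : ℕ} (A : Matrix (Fin m) (Fin m) ℤ) (c : E m) (hA : IsUnit A) :
    Function.Injective (IntAffMap A c) := by
  obtain ⟨B, c', _, hleft, _⟩ := intAff_inverse A c hA
  intro x y hxy
  have := congrArg (IntAffMap B c') hxy
  rwa [hleft, hleft] at this

-- ===== image of an edge is an edge (lemma C) =====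
lemma image_face_segment {m M : ℕ} (η : Fin M → Fin m → ℤ) (κ : Fin M → ℝ)
    (A : Matrix (Fin m) (Fin m) ℤ) (c : E m) (hA : IsUnit A)
    (hIm : IntAffMap A c '' Delta η κ = Delta η κ)
    (I : Finset (Fin M)) (v w : E m) (hF : Face η κ I = segment ℝ v w) :
    ∃ J : Finset (Fin M),
      Face η κ J = segment ℝ (IntAffMap A c v) (IntAffMap A c w) := by
  classical
  obtain ⟨B, c', hB, hleft, hright⟩ := intAff_inverse A c hA
  set φ := IntAffMap A c with hφ
  set ψ := IntAffMap B c' with hψ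
  have hψD : ∀ x ∈ Delta η κ, ψ x ∈ Delta η κ := by
    intro x hx
    rw [← hIm] at hx
    obtain ⟨y, hy, rfl⟩ := hx
    rw [hleft]; exact hy
  have hφD : ∀ x ∈ Delta η κ, φ x ∈ Delta η κ := by
    intro x hx; rw [← hIm]; exact ⟨x, hx, rfl⟩
  -- the affine functional M x = Σ_{i∈I} dot η_i (ψ x)
  set Lf : E m → ℝ := fun x => ∑ i ∈ I, dot (iv (η i)) x with hLf
  set K : ℝ := ∑ i ∈ I, κ i with hK
  have hLle : ∀ x ∈ Delta η κ, Lf x ≤ K := fun x hx =>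
    Finset.sum_le_sum fun i _ => hx i
  have hLiff : ∀ x ∈ Delta η κ, (Lf x = K ↔ x ∈ Face η κ I) := by
    intro x hx
    constructor
    · intro hL
      refine ⟨hx, ?_⟩
      have := (Finset.sum_eq_sum_iff_of_le (fun i _ => hx i)).1 hL
      intro i hi; exact this i hi
    · intro hxF
      exact Finset.sum_congr rfl fun i hi => hxF.2 i hi
  -- S is the image segment
  set S := segment ℝ (φ v) (φ w) with hSdef
  have hvD : v ∈ Delta η κ := by
    have : v ∈ Face η κ I := by rw [hF]; exact left_mem_segment ℝ v w
    exact this.1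
  have hwD : w ∈ Delta η κ := by
    have : w ∈ Face η κ I := by rw [hF]; exact right_mem_segment ℝ v w
    exact this.1
  have hSsub : S ⊆ Delta η κ := by
    rw [hSdef, ← intAff_image_segment, ← hF]
    intro z hz
    obtain ⟨x, hx, rfl⟩ := hz
    exact hφD x hx.1
  have hMS : ∀ x ∈ Delta η κ, (Lf (ψ x) = K ↔ x ∈ S) := by
    intro x hx
    have hψx := hψD x hx
    rw [hLiff (ψ x) hψx, hF]
    constructor
    · intro h
      rw [hSdef, ← intAff_image_segment]
      exact ⟨ψ x, h, hright x⟩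
    · intro h
      rw [hSdef, ← intAff_image_segment] at h
      obtain ⟨y, hy, hyx⟩ := h
      have : y = ψ x := by rw [← hyx, hleft]
      rwa [← this]
  have hMle : ∀ x ∈ Delta η κ, Lf (ψ x) ≤ K := fun x hx => hLle (ψ x) (hψD x hx)
  -- midpoint
  set m' : E m := (1/2 : ℝ) • φ v + (1/2 : ℝ) • φ w with hm'
  have hm'S : m' ∈ S := ⟨1/2, 1/2, by norm_num, by norm_num, by norm_num, rfl⟩
  have hm'D : m' ∈ Delta η κ := hSsub hm'S
  refine ⟨activeIdx η κ m', ?_⟩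
  apply Set.eq_of_subset_of_subset
  · -- Face(J) ⊆ S
    intro y hy
    by_contra hyS
    have hyD : y ∈ Delta η κ := hy.1
    have hMy : Lf (ψ y) < K :=
      lt_of_le_of_ne (hMle y hyD) (fun h => hyS ((hMS y hyD).1 h))
    have hMm' : Lf (ψ m') = K := (hMS m' hm'D).2 hm'S
    have hact : ∀ i, dot (iv (η i)) m' = κ i → dot (iv (η i)) y = κ i := by
      intro i h
      exact hy.2 i (Finset.mem_filter.2 ⟨Finset.mem_univ _, h⟩)
    obtain ⟨ε, hε, hzD⟩ := push_lemma η κ m' y hm'D hyD hact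
    set z := m' + ε • (m' - y) with hz
    -- compute Lf (ψ z)
    have hψaff : ψ z = ψ m' + ε • (ψ m' - ψ y) := by
      have h1 : z = (1+ε) • m' + (-ε) • y := by
        ext j; simp only [hz, smul_coord, add_coord, sub_coord]; ring
      have h2 : ψ ((1+ε) • m' + (-ε) • y) = (1+ε) • ψ m' + (-ε) • ψ y :=
        intAff_comb B c' (1+ε) (-ε) (by ring) m' y
      rw [h1, h2]
      ext j; simp only [smul_coord, add_coord, sub_coord]; ring
    have expand : ∀ i ∈ I, dot (iv (η i)) (ψ m' + ε • (ψ m' - ψ y))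
        = dot (iv (η i)) (ψ m') + ε * (dot (iv (η i)) (ψ m') - dot (iv (η i)) (ψ y)) :=
      fun i _ => by rw [dot_add, dot_smul, dot_sub]
    have hLlin : Lf (ψ z) = Lf (ψ m') + ε * (Lf (ψ m') - Lf (ψ y)) := by
      simp only [hLf, hψaff]
      rw [Finset.sum_congr rfl expand, Finset.sum_add_distrib, ← Finset.mul_sum,
        Finset.sum_sub_distrib]
    have hgt : Lf (ψ z) > K := by
      rw [hLlin, hMm']
      have : 0 < ε * (K - Lf (ψ y)) := mul_pos hε (by linarith)
      linarith
    exact absurd (hMle z hzD) (not_le.2 hgt)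
  · -- S ⊆ Face(J)
    intro x hx
    refine ⟨hSsub hx, ?_⟩
    intro i hi
    have hmi : dot (iv (η i)) m' = κ i := (Finset.mem_filter.1 hi).2
    -- both endpoints are active for i
    have hv' : dot (iv (η i)) (φ v) ≤ κ i := hφD v hvD i
    have hw' : dot (iv (η i)) (φ w) ≤ κ i := hφD w hwD i
    have hmv : dot (iv (η i)) m' = (1/2) * dot (iv (η i)) (φ v) + (1/2) * dot (iv (η i)) (φ w) := by
      rw [hm', dot_comb]
    have hveq : dot (iv (η i)) (φ v) = κ i := by linarith
    have hweq : dot (iv (η i)) (φ w) = κ i := by linarith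
    obtain ⟨a, b, ha, hb, hab, rfl⟩ := hx
    rw [dot_comb, hveq, hweq, ← add_mul, hab, one_mul]

-- ===== coordinates in the bundle =====
def proj {n : ℕ} (y : E (n + 1)) : E n := WithLp.toLp 2 (fun i => y (Fin.castSucc i))
def ext {n : ℕ} (p : E n) (t : ℝ) : E (n + 1) :=
  WithLp.toLp 2 (fun j => if h : (j : ℕ) < n then p ⟨j, h⟩ else t)

section BundleAux
variable {n N : ℕ}

@[simp] lemma proj_ext (p : E n) (t : ℝ) : proj (ext p t) = p := by
  ext i
  simp only [proj, ext]
  rw [dif_pos (by simpa using i.isLt : ((Fin.castSucc i : Fin (n+1)) : ℕ) < n)]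
  rfl

@[simp] lemma ext_last (p : E n) (t : ℝ) : ext p t (Fin.last n) = t := by
  simp [ext]

lemma ext_eta (y : E (n + 1)) : ext (proj y) (y (Fin.last n)) = y := by
  ext j
  by_cases h : (j : ℕ) < n
  · simp only [ext, dif_pos h, proj]
    rfl
  · have : j = Fin.last n := Fin.ext (by simp only [Fin.val_last]; omega)
    rw [this]; simp [ext]

lemma kappaB (κ : Fin N → ℝ) (κ1 κ2 : ℝ) : bunKappa1 κ κ1 κ2 idxB = κ1 := by
  simp [bunKappa1, idxB]
lemma kappaT (κ : Fin N → ℝ) (κ1 κ2 : ℝ) : bunKappa1 κ κ1 κ2 idxT = κ2 := by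
  simp [bunKappa1, idxT]
lemma kappaF (κ : Fin N → ℝ) (κ1 κ2 : ℝ) (i : Fin N) :
    bunKappa1 κ κ1 κ2 (Fin.castAdd 2 i) = κ i := by
  simp [bunKappa1, Fin.castAdd]

lemma dot_bun_fiber (η : Fin N → Fin n → ℤ) (H : Fin n → ℤ) (j : Fin (N+2))
    (hj : (j : ℕ) < N) (y : E (n+1)) :
    dot (iv (bunEta1 η H j)) y = dot (iv (η ⟨j, hj⟩)) (proj y) := by
  rw [dot, dot, Fin.sum_univ_castSucc]
  have hlast : iv (bunEta1 η H j) (Fin.last n) * y (Fin.last n) = 0 := by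
    simp [iv, bunEta1, dif_pos hj]
  rw [hlast, add_zero]
  apply Finset.sum_congr rfl
  intro i _
  have h1 : ((Fin.castSucc i : Fin (n+1)) : ℕ) < n := by simpa using i.isLt
  simp only [iv, bunEta1, dif_pos hj, dif_pos h1, proj]
  congr 2

lemma dot_bun_B (η : Fin N → Fin n → ℤ) (H : Fin n → ℤ) (y : E (n+1)) :
    dot (iv (bunEta1 η H idxB)) y = -(y (Fin.last n)) := by
  rw [dot, Fin.sum_univ_castSucc]
  have hB1 : ¬ ((idxB (N := N) : ℕ) < N) := by simp [idxB]
  have hB2 : (idxB (N := N) : ℕ) = N := rfl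
  have hzero : ∀ i : Fin n, iv (bunEta1 η H idxB) (Fin.castSucc i) * y (Fin.castSucc i) = 0 := by
    intro i
    have hi : (i : ℕ) ≠ n := by have := i.isLt; omega
    simp [iv, bunEta1, hB1, hB2, hi]
  rw [Finset.sum_congr rfl (fun i _ => hzero i), Finset.sum_const_zero, zero_add]
  simp [iv, bunEta1, hB1, hB2]

lemma dot_bun_T (η : Fin N → Fin n → ℤ) (H : Fin n → ℤ) (y : E (n+1)) :
    dot (iv (bunEta1 η H idxT)) y = dot (iv H) (proj y) + y (Fin.last n) := by
  rw [dot, dot, Fin.sum_univ_castSucc]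
  have hT1 : ¬ ((idxT (N := N) : ℕ) < N) := by simp [idxT]
  have hT2 : (idxT (N := N) : ℕ) ≠ N := by simp [idxT]
  congr 1
  · apply Finset.sum_congr rfl
    intro i _
    have h1 : ((Fin.castSucc i : Fin (n+1)) : ℕ) < n := by simpa using i.isLt
    simp only [iv, bunEta1, hT1, hT2, if_false, dif_pos h1, proj]
    congr 2
  · have : ¬ ((Fin.last n : ℕ) < n) := by simp
    simp [iv, bunEta1, hT1, hT2, this]

lemma mem_bunDelta (η : Fin N → Fin n → ℤ) (κ : Fin N → ℝ) (H : Fin n → ℤ)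
    (κ1 κ2 : ℝ) (y : E (n+1)) :
    y ∈ Delta (bunEta1 η H) (bunKappa1 κ κ1 κ2) ↔
      proj y ∈ Delta η κ ∧ -(y (Fin.last n)) ≤ κ1 ∧
        dot (iv H) (proj y) + y (Fin.last n) ≤ κ2 := by
  constructor
  · intro hy
    refine ⟨fun i => ?_, ?_, ?_⟩
    · have := hy (Fin.castAdd 2 i)
      rwa [dot_bun_fiber η H _ (by simpa using i.isLt), kappaF,
        show (⟨((Fin.castAdd 2 i : Fin (N+2)) : ℕ), by simpa using i.isLt⟩ : Fin N) = i
          from Fin.ext (by simp)] at this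
    · have := hy idxB
      rwa [dot_bun_B, kappaB] at this
    · have := hy idxT
      rwa [dot_bun_T, kappaT] at this
  · rintro ⟨h1, h2, h3⟩ j
    by_cases hj : (j : ℕ) < N
    · rw [dot_bun_fiber η H j hj]
      have : bunKappa1 κ κ1 κ2 j = κ ⟨j, hj⟩ := by simp [bunKappa1, hj]
      rw [this]
      exact h1 _
    · by_cases hj2 : (j : ℕ) = N
      · have : j = idxB := Fin.ext hj2
        rw [this, dot_bun_B, kappaB]; exact h2
      · have hval : (idxT (N := N) : ℕ) = N + 1 := rfl
        have : j = idxT := Fin.ext (by rw [hval]; have := j.isLt; omega)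
        rw [this, dot_bun_T, kappaT]; exact h3

-- ===== vertical segments =====
@[simp] lemma ext_castSucc (p : E n) (t : ℝ) (i : Fin n) :
    ext p t (Fin.castSucc i) = p i := by
  have h : ((Fin.castSucc i : Fin (n+1)) : ℕ) < n := by simpa using i.isLt
  simp only [ext, dif_pos h]
  rfl

lemma ext_comb (p : E n) (t1 t2 a b : ℝ) (hab : a + b = 1) :
    a • ext p t1 + b • ext p t2 = ext p (a * t1 + b * t2) := by
  ext j
  by_cases h : (j : ℕ) < n
  · simp only [add_coord, smul_coord, ext, dif_pos h]
    rw [← add_mul, hab, one_mul]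
  · simp only [add_coord, smul_coord, ext, dif_neg h]

lemma segment_vert (p : E n) (t1 t2 : ℝ) (h : t1 < t2) :
    segment ℝ (ext p t1) (ext p t2)
      = {y : E (n+1) | proj y = p ∧ t1 ≤ y (Fin.last n) ∧ y (Fin.last n) ≤ t2} := by
  have hne : t2 - t1 ≠ 0 := by linarith
  ext y
  constructor
  · rintro ⟨a, b, ha, hb, hab, rfl⟩
    rw [ext_comb p t1 t2 a b hab]
    have ha' : a = 1 - b := by linarith
    refine ⟨proj_ext _ _, ?_, ?_⟩
    · rw [ext_last, ha']
      nlinarith [mul_nonneg hb (sub_nonneg.2 h.le)]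
    · rw [ext_last, ha']
      nlinarith [mul_nonneg hb (sub_nonneg.2 h.le)]
  · rintro ⟨h1, h2, h3⟩
    set t := y (Fin.last n) with ht
    have hab : (t2 - t)/(t2 - t1) + (t - t1)/(t2 - t1) = 1 := by
      rw [← add_div, show t2 - t + (t - t1) = t2 - t1 by ring]
      exact div_self hne
    refine ⟨(t2 - t)/(t2 - t1), (t - t1)/(t2 - t1),
      by apply div_nonneg <;> linarith, by apply div_nonneg <;> linarith, hab, ?_⟩
    rw [ext_comb _ _ _ _ _ hab]
    have harith : (t2 - t)/(t2 - t1) * t1 + (t - t1)/(t2 - t1) * t2 = t := by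
      field_simp
      ring
    rw [harith, ← h1, ht, ext_eta]

lemma lastBasis_eq_iv : lastBasis n = iv (fun t : Fin (n+1) => if (t : ℕ) = n then 1 else 0) := by
  ext j
  simp only [lastBasis, iv]
  by_cases h : (j : ℕ) = n <;> simp [h]

lemma prim_lastInt : IsPrimitive (fun t : Fin (n+1) => if (t : ℕ) = n then (1:ℤ) else 0) := by
  have hdvd : Finset.univ.gcd (fun t : Fin (n+1) => if (t : ℕ) = n then (1:ℤ) else 0) ∣ 1 := by
    have := Finset.gcd_dvd (f := fun t : Fin (n+1) => if (t : ℕ) = n then (1:ℤ) else 0)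
      (Finset.mem_univ (Fin.last n))
    simpa using this
  have hnn := gcd_int_nonneg (fun t : Fin (n+1) => if (t : ℕ) = n then (1:ℤ) else 0)
  rcases Int.isUnit_iff.1 (isUnit_of_dvd_one hdvd) with h | h
  · exact h
  · rw [IsPrimitive]; omega

lemma vert_sub (p : E n) (t1 t2 : ℝ) :
    ext p t2 - ext p t1 = (t2 - t1) • lastBasis n := by
  ext j
  by_cases h : (j : ℕ) < n
  · have hne : (j : ℕ) ≠ n := by omega
    simp only [sub_coord, smul_coord, ext, dif_pos h, lastBasis, if_neg hne]
    ring
  · have hje : (j : ℕ) = n := by have := j.isLt; omega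
    simp only [sub_coord, smul_coord, ext, dif_neg h, lastBasis, if_pos hje]
    ring

-- ===== the vertical edge over a vertex of the fiber =====
lemma bundle_edge (η : Fin N → Fin n → ℤ) (κ : Fin N → ℝ) (H : Fin n → ℤ) (κ1 κ2 : ℝ)
    (hcomb : CombProd1 η κ H κ1 κ2) (I : Finset (Fin N)) (p : E n)
    (hface : Face η κ I = {p}) :
    0 < κ1 + κ2 - dot (iv H) p ∧
    Face (bunEta1 η H) (bunKappa1 κ κ1 κ2) (I.image (Fin.castAdd 2))
      = segment ℝ (ext p (-κ1)) (ext p (κ2 - dot (iv H) p)) ∧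
    Face (bunEta1 η H) (bunKappa1 κ κ1 κ2) (insert idxB (I.image (Fin.castAdd 2)))
      = {ext p (-κ1)} ∧
    Face (bunEta1 η H) (bunKappa1 κ κ1 κ2) (insert idxT (I.image (Fin.castAdd 2)))
      = {ext p (κ2 - dot (iv H) p)} := by
  classical
  set h := dot (iv H) p with hh
  have hpF : p ∈ Face η κ I := by rw [hface]; rfl
  have hpD : p ∈ Delta η κ := hpF.1
  -- fiber equalities pin down the projection
  have hfib : ∀ y, y ∈ Delta (bunEta1 η H) (bunKappa1 κ κ1 κ2) →
      (∀ i ∈ I.image (Fin.castAdd 2), dot (iv ((bunEta1 η H) i)) y = (bunKappa1 κ κ1 κ2) i) → proj y = p := by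
    intro y hy heq
    have h1 : proj y ∈ Delta η κ := ((mem_bunDelta η κ H κ1 κ2 y).1 hy).1
    have h2 : ∀ i ∈ I, dot (iv (η i)) (proj y) = κ i := by
      intro i hi
      have hcast : ((Fin.castAdd 2 i : Fin (N+2)) : ℕ) < N := by simpa using i.isLt
      have := heq (Fin.castAdd 2 i) (Finset.mem_image_of_mem _ hi)
      rw [dot_bun_fiber η H _ hcast, kappaF] at this
      have heta : (⟨((Fin.castAdd 2 i : Fin (N+2)) : ℕ), hcast⟩ : Fin N) = i :=
        Fin.ext (by simp)
      rwa [heta] at this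
    have : proj y ∈ Face η κ I := ⟨h1, h2⟩
    rw [hface] at this
    exact this
  -- the bottom vertex face is nonempty
  obtain ⟨y0, hy0⟩ := ((hcomb.2.2 I).1).2 ⟨p, hpF⟩
  have hy0D : y0 ∈ Delta (bunEta1 η H) (bunKappa1 κ κ1 κ2) := hy0.1
  have hy0B : y0 (Fin.last n) = -κ1 := by
    have := hy0.2 idxB (Finset.mem_insert_self _ _)
    rw [dot_bun_B, kappaB] at this
    linarith
  have hy0p : proj y0 = p := hfib y0 hy0D
    (fun i hi => hy0.2 i (Finset.mem_insert_of_mem hi))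
  have hy0T : dot (iv H) (proj y0) + y0 (Fin.last n) ≤ κ2 :=
    ((mem_bunDelta η κ H κ1 κ2 y0).1 hy0D).2.2
  rw [hy0p, hy0B] at hy0T
  have hl0 : 0 ≤ κ1 + κ2 - h := by rw [hh]; linarith
  -- strictness
  have hlpos : 0 < κ1 + κ2 - h := by
    rcases lt_or_eq_of_le hl0 with hlt | heq0
    · exact hlt
    · exfalso
      have hy0f : y0 ∈ Face (bunEta1 η H) (bunKappa1 κ κ1 κ2) {idxB, idxT} := by
        refine ⟨hy0D, ?_⟩
        intro i hi
        rcases Finset.mem_insert.1 hi with rfl | hi2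
        · rw [dot_bun_B, kappaB, hy0B]; ring
        · rw [Finset.mem_singleton.1 hi2, dot_bun_T, kappaT, hy0p, hy0B]
          rw [hh] at heq0; linarith
      rw [hcomb.2.1] at hy0f
      exact hy0f
  -- membership characterization of the fiber face
  have hchar : ∀ y, y ∈ Face (bunEta1 η H) (bunKappa1 κ κ1 κ2) (I.image (Fin.castAdd 2)) ↔
      (proj y = p ∧ -κ1 ≤ y (Fin.last n) ∧ y (Fin.last n) ≤ κ2 - h) := by
    intro y
    constructor
    · intro hy
      have hyp := hfib y hy.1 hy.2
      have hmem := (mem_bunDelta η κ H κ1 κ2 y).1 hy.1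
      refine ⟨hyp, by linarith [hmem.2.1], ?_⟩
      have := hmem.2.2
      rw [hyp, ← hh] at this
      linarith
    · rintro ⟨h1, h2, h3⟩
      have hyD : y ∈ Delta (bunEta1 η H) (bunKappa1 κ κ1 κ2) := by
        rw [mem_bunDelta]
        refine ⟨by rw [h1]; exact hpD, by linarith, ?_⟩
        rw [h1, ← hh]; linarith
      refine ⟨hyD, ?_⟩
      intro i hi
      obtain ⟨i₀, hi₀, rfl⟩ := Finset.mem_image.1 hi
      have hcast : ((Fin.castAdd 2 i₀ : Fin (N+2)) : ℕ) < N := by simpa using i₀.isLt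
      rw [dot_bun_fiber η H _ hcast, kappaF]
      have heta : (⟨((Fin.castAdd 2 i₀ : Fin (N+2)) : ℕ), hcast⟩ : Fin N) = i₀ :=
        Fin.ext (by simp)
      rw [heta, h1]
      exact hpF.2 i₀ hi₀
  have hseg : Face (bunEta1 η H) (bunKappa1 κ κ1 κ2) (I.image (Fin.castAdd 2))
      = segment ℝ (ext p (-κ1)) (ext p (κ2 - h)) := by
    rw [segment_vert p (-κ1) (κ2 - h) (by linarith)]
    ext y
    rw [hchar y]
    simp only [Set.mem_setOf_eq]
  -- bottom and top singletons
  have hbot : Face (bunEta1 η H) (bunKappa1 κ κ1 κ2) (insert idxB (I.image (Fin.castAdd 2))) = {ext p (-κ1)} := by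
    ext y
    constructor
    · intro hy
      have hyfib : y ∈ Face (bunEta1 η H) (bunKappa1 κ κ1 κ2) (I.image (Fin.castAdd 2)) :=
        ⟨hy.1, fun i hi => hy.2 i (Finset.mem_insert_of_mem hi)⟩
      have hc := (hchar y).1 hyfib
      have hyB : y (Fin.last n) = -κ1 := by
        have := hy.2 idxB (Finset.mem_insert_self _ _)
        rw [dot_bun_B, kappaB] at this
        linarith
      have : y = ext p (-κ1) := by rw [← hc.1, ← hyB, ext_eta]
      exact this
    · intro hy
      rw [Set.mem_singleton_iff] at hy
      subst hy
      have hyfib : ext p (-κ1) ∈ Face (bunEta1 η H) (bunKappa1 κ κ1 κ2) (I.image (Fin.castAdd 2)) := by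
        rw [hchar]
        refine ⟨proj_ext _ _, by rw [ext_last], by rw [ext_last]; linarith⟩
      refine ⟨hyfib.1, ?_⟩
      intro i hi
      rcases Finset.mem_insert.1 hi with rfl | hi2
      · rw [dot_bun_B, kappaB, ext_last]; ring
      · exact hyfib.2 i hi2
  have htop : Face (bunEta1 η H) (bunKappa1 κ κ1 κ2) (insert idxT (I.image (Fin.castAdd 2))) = {ext p (κ2 - h)} := by
    ext y
    constructor
    · intro hy
      have hyfib : y ∈ Face (bunEta1 η H) (bunKappa1 κ κ1 κ2) (I.image (Fin.castAdd 2)) :=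
        ⟨hy.1, fun i hi => hy.2 i (Finset.mem_insert_of_mem hi)⟩
      have hc := (hchar y).1 hyfib
      have hyT : y (Fin.last n) = κ2 - h := by
        have := hy.2 idxT (Finset.mem_insert_self _ _)
        rw [dot_bun_T, kappaT, hc.1, ← hh] at this
        linarith
      have : y = ext p (κ2 - h) := by rw [← hc.1, ← hyT, ext_eta]
      exact this
    · intro hy
      rw [Set.mem_singleton_iff] at hy
      subst hy
      have hyfib : ext p (κ2 - h) ∈ Face (bunEta1 η H) (bunKappa1 κ κ1 κ2) (I.image (Fin.castAdd 2)) := by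
        rw [hchar]
        refine ⟨proj_ext _ _, by rw [ext_last]; linarith, by rw [ext_last]⟩
      refine ⟨hyfib.1, ?_⟩
      intro i hi
      rcases Finset.mem_insert.1 hi with rfl | hi2
      · rw [dot_bun_T, kappaT, proj_ext, ext_last, ← hh]; ring
      · exact hyfib.2 i hi2
  exact ⟨hlpos, hseg, hbot, htop⟩

@[simp] lemma neg_coord {m : ℕ} (v : E m) (j : Fin m) : (-v) j = -(v j) := rfl

lemma dot_neg_left {m : ℕ} (u x : E m) : dot (-u) x = -dot u x := by
  simp [dot, Finset.sum_neg_distrib]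

lemma intAff_extr {m M : ℕ} (η : Fin M → Fin m → ℤ) (κ : Fin M → ℝ)
    (A : Matrix (Fin m) (Fin m) ℤ) (c : E m) (hA : IsUnit A)
    (hIm : IntAffMap A c '' Delta η κ = Delta η κ) (x : E m)
    (hx : MyExtr (Delta η κ) x) : MyExtr (Delta η κ) (IntAffMap A c x) := by
  obtain ⟨B, c', hB, hleft, hright⟩ := intAff_inverse A c hA
  have hφD : ∀ z ∈ Delta η κ, IntAffMap A c z ∈ Delta η κ := by
    intro z hz; rw [← hIm]; exact ⟨z, hz, rfl⟩
  have hψD : ∀ z ∈ Delta η κ, IntAffMap B c' z ∈ Delta η κ := by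
    intro z hz
    rw [← hIm] at hz
    obtain ⟨u, hu, rfl⟩ := hz
    rw [hleft]; exact hu
  refine ⟨hφD x hx.1, ?_⟩
  intro y hy z hz a b ha hb hab heq
  have hxd : x = a • IntAffMap B c' y + b • IntAffMap B c' z := by
    have := congrArg (IntAffMap B c') heq
    rw [hleft, intAff_comb B c' a b hab] at this
    exact this
  have := hx.2 (IntAffMap B c' y) (hψD y hy) (IntAffMap B c' z) (hψD z hz)
    a b ha hb hab hxd
  have := congrArg (IntAffMap A c) this
  rwa [hright] at this


end BundleAux

/-- A nontrivial (`H ≠ 0`) bundle polytope over the `1`-simplex which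
is combinatorially a product and generic (every edge whose affine length equals that of
some vertical edge is itself vertical) has two vertices not related by any integral
affine symmetry of the polytope. -/
theorem stmt12 {n N : ℕ} (hn : 1 ≤ n) (hN : n + 1 ≤ N)
    (η : Fin N → Fin n → ℤ) (hprim : ∀ i, IsPrimitive (η i))
    (κ : Fin N → ℝ) (hsm : IsSmoothPolytope η κ)
    (H : Fin n → ℤ) (hH : H ≠ 0) (κ1 κ2 : ℝ)
    (hcomb : CombProd1 η κ H κ1 κ2)
    (hgen : ∀ v w v' w' : E (n + 1),
      IsEdgeBetween (bunEta1 η H) (bunKappa1 κ κ1 κ2) v w →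
      IsEdgeBetween (bunEta1 η H) (bunKappa1 κ κ1 κ2) v' w' →
      VerticalSeg v' w' → affLen v w = affLen v' w' → VerticalSeg v w) :
    ∃ v₁ v₂ : E (n + 1),
      IsVertex (bunEta1 η H) (bunKappa1 κ κ1 κ2) v₁ ∧
      IsVertex (bunEta1 η H) (bunKappa1 κ κ1 κ2) v₂ ∧
      ¬ ∃ (A : Matrix (Fin (n + 1)) (Fin (n + 1)) ℤ) (c : E (n + 1)),
          IsUnit A ∧
          IntAffMap A c '' Delta (bunEta1 η H) (bunKappa1 κ κ1 κ2) =
            Delta (bunEta1 η H) (bunKappa1 κ κ1 κ2) ∧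
          IntAffMap A c v₁ = v₂ := by
  classical
  obtain ⟨hcompact, hint, _hfacets, _hsmooth⟩ := hsm
  have hne : (Delta η κ).Nonempty := hint.mono interior_subset
  -- extreme minimizer p₁ and maximizer p₂ of ⟨H,·⟩
  obtain ⟨p₁, hp₁ext, hp₁max⟩ := exists_extr_max η κ hcompact hne (-(iv H))
  obtain ⟨p₂, hp₂ext, hp₂max⟩ := exists_extr_max η κ hcompact hne (iv H)
  have hp₁min : ∀ x ∈ Delta η κ, dot (iv H) p₁ ≤ dot (iv H) x := by
    intro x hx
    have := hp₁max x hx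
    rw [dot_neg_left, dot_neg_left] at this
    linarith
  set h₁ := dot (iv H) p₁ with hh₁
  set h₂ := dot (iv H) p₂ with hh₂
  -- strict inequality h₁ < h₂ via an interior point
  have hstrict : h₁ < h₂ := by
    obtain ⟨x0, hx0⟩ := hint
    obtain ⟨ε, hε, hball⟩ := Metric.mem_nhds_iff.1 (mem_interior_iff_mem_nhds.1 hx0)
    obtain ⟨j, hj⟩ := Function.ne_iff.1 hH
    set u := iv H with hu
    have hdotHH : 0 < dot u u := by
      apply Finset.sum_pos'
      · intro i _; exact mul_self_nonneg _
      · refine ⟨j, Finset.mem_univ j, ?_⟩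
        have : (u j : ℝ) ≠ 0 := by
          simp only [hu, iv]
          exact_mod_cast hj
        exact mul_self_pos.2 this
    set δ := ε / (2 * (‖u‖ + 1)) with hδ
    have hnorm : (0:ℝ) ≤ ‖u‖ := norm_nonneg _
    have hδpos : 0 < δ := by rw [hδ]; positivity
    set q := x0 + δ • u with hq
    have hqD : q ∈ Delta η κ := by
      apply hball
      rw [Metric.mem_ball, dist_eq_norm]
      have : q - x0 = δ • u := by rw [hq]; abel
      rw [this, norm_smul, Real.norm_eq_abs, abs_of_pos hδpos]
      calc δ * ‖u‖ ≤ δ * (‖u‖ + 1) := by nlinarith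
        _ = ε / (2 * (‖u‖ + 1)) * (‖u‖ + 1) := by rw [hδ]
        _ = ε / 2 := by field_simp
        _ < ε := by linarith
    have hdq : dot u q = dot u x0 + δ * dot u u := by
      rw [hq, dot_add, dot_smul]
    have h1 : h₁ ≤ dot u x0 := hp₁min x0 (interior_subset hx0)
    have h2 : dot u q ≤ h₂ := hp₂max q hqD
    nlinarith
  -- fiber vertices
  have hF₁ : Face η κ (activeIdx η κ p₁) = {p₁} := face_active_of_extr η κ p₁ hp₁ext
  have hF₂ : Face η κ (activeIdx η κ p₂) = {p₂} := face_active_of_extr η κ p₂ hp₂ext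
  obtain ⟨hl₁, hseg₁, hbot₁, htop₁⟩ := bundle_edge η κ H κ1 κ2 hcomb _ p₁ hF₁
  obtain ⟨hl₂, hseg₂, hbot₂, htop₂⟩ := bundle_edge η κ H κ1 κ2 hcomb _ p₂ hF₂
  rw [← hh₁] at hl₁ hseg₁ htop₁
  rw [← hh₂] at hl₂ hseg₂ htop₂
  set v₁ := ext p₁ (-κ1) with hv₁
  set w₁ := ext p₁ (κ2 - h₁) with hw₁
  set v₂ := ext p₂ (-κ1) with hv₂
  refine ⟨v₁, v₂, ⟨_, hbot₁⟩, ⟨_, hbot₂⟩, ?_⟩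
  rintro ⟨A, c, hA, hIm, hmap⟩
  -- the vertical edge over p₁
  have hv₁w₁ : v₁ ≠ w₁ := by
    intro hvw
    have : v₁ (Fin.last n) = w₁ (Fin.last n) := by rw [hvw]
    rw [hv₁, hw₁, ext_last, ext_last] at this
    linarith
  have hsub₁ : w₁ - v₁ = (κ1 + κ2 - h₁) • lastBasis n := by
    rw [hv₁, hw₁, vert_sub, show κ2 - h₁ - -κ1 = κ1 + κ2 - h₁ by ring]
  have hedge₁ : IsEdgeBetween (bunEta1 η H) (bunKappa1 κ κ1 κ2) v₁ w₁ :=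
    ⟨hv₁w₁, ⟨_, hbot₁⟩, ⟨_, htop₁⟩, ⟨_, hseg₁⟩⟩
  -- w₁ in Delta'
  have hw₁F : w₁ ∈ Face (bunEta1 η H) (bunKappa1 κ κ1 κ2)
      (insert idxT ((activeIdx η κ p₁).image (Fin.castAdd 2))) := by
    rw [htop₁]; rfl
  have hw₁D : w₁ ∈ Delta (bunEta1 η H) (bunKappa1 κ κ1 κ2) := hw₁F.1
  -- the image edge
  have hne₂ : v₂ ≠ IntAffMap A c w₁ := by
    intro hh
    exact hv₁w₁ (intAff_injective A c hA (hmap.trans hh))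
  have hvert₂ : IsVertex (bunEta1 η H) (bunKappa1 κ κ1 κ2) (IntAffMap A c w₁) := by
    have hextr := extr_of_face_singleton (bunEta1 η H) (bunKappa1 κ κ1 κ2) _ w₁ htop₁
    have := intAff_extr (bunEta1 η H) (bunKappa1 κ κ1 κ2) A c hA hIm w₁ hextr
    exact ⟨_, face_active_of_extr _ _ _ this⟩
  obtain ⟨J, hJ⟩ := image_face_segment (bunEta1 η H) (bunKappa1 κ κ1 κ2) A c hA hIm
    _ v₁ w₁ hseg₁
  rw [hmap] at hJ
  have hedge₂ : IsEdgeBetween (bunEta1 η H) (bunKappa1 κ κ1 κ2) v₂ (IntAffMap A c w₁) :=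
    ⟨hne₂, ⟨_, hbot₂⟩, hvert₂, ⟨J, hJ⟩⟩
  -- affine lengths
  set lInt : Fin (n+1) → ℤ := fun t => if (t : ℕ) = n then 1 else 0 with hlInt
  have hsub₁' : w₁ - v₁ = (κ1 + κ2 - h₁) • iv lInt := by
    rw [hsub₁, lastBasis_eq_iv]
  have haff₁ : affLen v₁ w₁ = κ1 + κ2 - h₁ :=
    affLen_eq _ _ _ lInt hl₁ prim_lastInt hsub₁'
  have haff₂ : affLen v₂ (IntAffMap A c w₁) = κ1 + κ2 - h₁ := by
    rw [← hmap]
    exact affLen_image A c hA v₁ w₁ _ lInt hl₁ prim_lastInt hsub₁'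
  -- genericity: the image edge is vertical
  have hvert : VerticalSeg v₂ (IntAffMap A c w₁) :=
    hgen v₂ (IntAffMap A c w₁) v₁ w₁ hedge₂ hedge₁ ⟨κ1 + κ2 - h₁, hsub₁⟩
      (haff₂.trans haff₁.symm)
  obtain ⟨cc, hcc⟩ := hvert
  -- coordinates of the image point
  have hw2eq : IntAffMap A c w₁ = ext p₂ (-κ1 + cc) := by
    have h1 : IntAffMap A c w₁ = v₂ + cc • lastBasis n := by
      rw [← hcc]; ext j; simp only [add_coord, sub_coord]; ring
    rw [h1, hv₂]
    ext j
    by_cases h : (j : ℕ) < n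
    · have hne' : (j : ℕ) ≠ n := by omega
      simp only [add_coord, smul_coord, ext, dif_pos h, lastBasis, if_neg hne']
      ring
    · have hje : (j : ℕ) = n := by have := j.isLt; omega
      simp only [add_coord, smul_coord, ext, dif_neg h, lastBasis, if_pos hje]
      ring
  have hw₂D : IntAffMap A c w₁ ∈ Delta (bunEta1 η H) (bunKappa1 κ κ1 κ2) := by
    rw [← hIm]; exact ⟨w₁, hw₁D, rfl⟩
  have hmem := (mem_bunDelta η κ H κ1 κ2 _).1 hw₂D
  rw [hw2eq, proj_ext, ext_last, ← hh₂] at hmem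
  -- cc ≥ 0 from the bottom constraint
  have hccnn : 0 ≤ cc := by linarith [hmem.2.1]
  rcases lt_or_eq_of_le hccnn with hcpos | hczero
  · -- cc > 0: compute affLen and contradict the top constraint
    have hsub₂ : IntAffMap A c w₁ - v₂ = cc • iv lInt := by
      rw [hcc, lastBasis_eq_iv]
    have : affLen v₂ (IntAffMap A c w₁) = cc :=
      affLen_eq _ _ _ lInt hcpos prim_lastInt hsub₂
    rw [haff₂] at this
    have htopc := hmem.2.2
    rw [← this] at htopc
    linarith
  · -- cc = 0 contradicts injectivity
    apply hne₂
    rw [hw2eq, ← hczero, hv₂]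
    norm_num


end ToricStmt
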